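/- Let 𝒢 ⊂ 𝔽_3^{12} be a copy of the extended ternary Golay code containing the all-ones word. Then there are exactly 11 codewords C ∈ 𝒢 whose first entry equals +1, having exactly six entries equal to +1 and six entries equal to -1. -/

import Mathlib

open Finset Module

/-- The weight of a ternary word: its number of nonzero entries. -/
def wt3 (C : Fin 12 → ZMod 3) : ℕ :=
  (Finset.univ.filter fun i => C i ≠ 0).card



lemma golay_selfdual (G : Submodule (ZMod 3) (Fin 12 → ZMod 3))
    (hdim : finrank (ZMod 3) G = 6)
    (horth : ∀ C ∈ G, ∀ D ∈ G, (∑ i, C i * D i) = 0) :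
    ∀ D, (∀ C ∈ G, ∑ i, C i * D i = 0) → D ∈ G := by
  set B : LinearMap.BilinForm (ZMod 3) (Fin 12 → ZMod 3) := Matrix.toBilin' 1 with hB
  have hBapp : ∀ x y, B x y = ∑ i, x i * y i := by
    intro x y
    rw [hB, Matrix.toBilin'_apply']
    simp [dotProduct]
  have hrefl : B.IsRefl := by
    intro x y h
    rw [hBapp] at h ⊢
    rw [← h]
    exact Finset.sum_congr rfl fun i _ => mul_comm _ _
  have hnd : B.Nondegenerate := by
    apply Matrix.Nondegenerate.toBilin'
    rw [Matrix.nondegenerate_iff_det_ne_zero]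
    simp
  have hle : G ≤ B.orthogonal G := by
    intro x hx
    rw [LinearMap.BilinForm.mem_orthogonal_iff]
    intro y hy
    rw [hBapp]
    exact horth y hy x hx
  have hfr : finrank (ZMod 3) (B.orthogonal G) = 6 := by
    rw [LinearMap.BilinForm.finrank_orthogonal hnd G, hdim,
      Module.finrank_fintype_fun_eq_card]
    simp
  have heq : G = B.orthogonal G := Submodule.eq_of_le_of_finrank_le hle (by rw [hfr, hdim])
  intro D hD
  rw [heq, LinearMap.BilinForm.mem_orthogonal_iff]
  intro y hy
  rw [hBapp]
  exact hD y hy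



lemma fiber_card {A W : Type*} [AddCommGroup A] [AddCommGroup W]
    [Fintype A] [Fintype W] [DecidableEq A] [DecidableEq W]
    (f : A →+ W) (hs : Function.Surjective f) (b : W) :
    (Finset.univ.filter fun x => f x = b).card * Fintype.card W = Fintype.card A := by
  have key : ∀ c : W, (Finset.univ.filter fun x => f x = c).card
      = (Finset.univ.filter fun x => f x = 0).card := by
    intro c
    obtain ⟨x0, hx0⟩ := hs c
    apply Finset.card_bij (fun x _ => x - x0)
    · intro a ha
      simp only [Finset.mem_filter, Finset.mem_univ, true_and] at ha ⊢
      simp [ha, hx0]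
    · intro a _ a' _ h
      exact sub_left_injective h
    · intro c' hc'
      simp only [Finset.mem_filter, Finset.mem_univ, true_and] at hc'
      exact ⟨c' + x0, by simp [Finset.mem_filter, hc', hx0], by simp⟩
  have htot : Fintype.card A = ∑ c : W, (Finset.univ.filter fun x => f x = c).card := by
    rw [← Finset.card_univ,
      Finset.card_eq_sum_card_fiberwise (fun x _ => Finset.mem_univ (f x))]
  rw [key b, htot]
  simp only [key, Finset.sum_const, Finset.card_univ, smul_eq_mul]
  exact (mul_comm _ _)

-- fiber count through a predicate on the codomain
lemma fiber_card_pred {A W : Type*} [AddCommGroup A] [AddCommGroup W]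
    [Fintype A] [Fintype W] [DecidableEq A] [DecidableEq W]
    (f : A →+ W) (hs : Function.Surjective f) (P : W → Prop) [DecidablePred P] :
    (Finset.univ.filter fun x => P (f x)).card * Fintype.card W
      = (Finset.univ.filter P).card * Fintype.card A := by
  have : (Finset.univ.filter fun x => P (f x)).card
      = ∑ c ∈ Finset.univ.filter P, (Finset.univ.filter fun x => f x = c).card := by
    rw [Finset.card_eq_sum_card_fiberwise
      (f := f) (t := Finset.univ.filter P) (by intro x hx; simpa using (Finset.mem_filter.mp hx).2)]
    refine Finset.sum_congr rfl fun c hc => ?_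
    congr 1
    ext x
    simp only [Finset.mem_filter, Finset.mem_univ, true_and]
    constructor
    · rintro ⟨_, h⟩; exact h
    · intro h; exact ⟨by rw [h]; exact (Finset.mem_filter.mp hc).2, h⟩
  rw [this, Finset.sum_mul]
  simp only [fiber_card f hs]
  rw [Finset.sum_const, smul_eq_mul]

set_option maxHeartbeats 1000000 in
/-- if `𝒢 ⊂ 𝔽_3^{12}` is a copy of the extended ternary Golay code
(6-dimensional, self-orthogonal, minimum weight 6) containing the all-ones word,
then there are exactly 11 codewords whose first entry is `+1`, having exactly six
entries equal to `+1` and six entries equal to `-1`. -/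
theorem stmt_9 (G : Submodule (ZMod 3) (Fin 12 → ZMod 3))
    (hdim : Module.finrank (ZMod 3) G = 6)
    (horth : ∀ C ∈ G, ∀ D ∈ G, (∑ i, C i * D i) = 0)
    (hmin : ∀ C ∈ G, C ≠ 0 → 6 ≤ wt3 C)
    (hones : (fun _ => (1 : ZMod 3)) ∈ G) :
    {C : Fin 12 → ZMod 3 | C ∈ G ∧ C 0 = 1 ∧
      (Finset.univ.filter fun i => C i = 1).card = 6 ∧
      (Finset.univ.filter fun i => C i = -1).card = 6}.ncard = 11 := by

  classical
  have hcard : Fintype.card G = 729 := by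
    rw [card_eq_pow_finrank (K := ZMod 3) (V := G), hdim]
    rfl
  have S1 : ∀ i : Fin 12,
      (Finset.univ.filter fun C : G => (C : Fin 12 → ZMod 3) i ≠ 0).card = 486 := by
    intro i
    set f : G →ₗ[ZMod 3] ZMod 3 := (LinearMap.proj i).comp G.subtype with hf
    have hsurj : Function.Surjective f := by
      intro t
      exact ⟨t • ⟨fun _ => 1, hones⟩, by simp [hf]⟩
    have := fiber_card_pred f.toAddMonoidHom hsurj (fun x => x ≠ 0)
    simp only [LinearMap.toAddMonoidHom_coe, hcard] at this
    have h2 : (Finset.univ.filter fun x : ZMod 3 => x ≠ 0).card = 2 := by decide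
    have h3 : Fintype.card (ZMod 3) = 3 := by decide
    rw [h2, h3] at this
    have hf' : ∀ C : G, f C = (C : Fin 12 → ZMod 3) i := fun C => rfl
    simp only [hf'] at this
    omega
  have S2 : ∀ i j : Fin 12, i ≠ j →
      (Finset.univ.filter fun C : G =>
        (C : Fin 12 → ZMod 3) i ≠ 0 ∧ (C : Fin 12 → ZMod 3) j ≠ 0).card = 324 := by
    intro i j hij
    set f : G →ₗ[ZMod 3] (ZMod 3 × ZMod 3) :=
      LinearMap.prod ((LinearMap.proj i).comp G.subtype) ((LinearMap.proj j).comp G.subtype)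
      with hf
    -- there is a codeword with distinct entries at i and j
    have hex : ∃ C0 : G, (C0 : Fin 12 → ZMod 3) i ≠ (C0 : Fin 12 → ZMod 3) j := by
      by_contra h
      push_neg at h
      set D : Fin 12 → ZMod 3 := fun k => if k = i then 1 else if k = j then -1 else 0
        with hDdef
      have hD : D ∈ G := by
        apply golay_selfdual G hdim horth
        intro C hC
        have hterm : ∀ k, C k * D k
            = (if k = i then C i else 0) - (if k = j then C j else 0) := by
          intro k
          rcases eq_or_ne k i with rfl | hki
          · simp [hDdef, (by simpa using hij : k ≠ j)]
          · rcases eq_or_ne k j with rfl | hkj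
            · simp [hDdef, hki]
            · simp [hDdef, hki, hkj]
        rw [Finset.sum_congr rfl fun k _ => hterm k, Finset.sum_sub_distrib]
        rw [Finset.sum_ite_eq' Finset.univ i (fun _ => C i),
          Finset.sum_ite_eq' Finset.univ j (fun _ => C j)]
        simp only [Finset.mem_univ, if_true]
        rw [sub_eq_zero]
        exact h ⟨C, hC⟩
      have hne : D ≠ 0 := by
        intro h0
        have := congrFun h0 i
        simp [hDdef] at this
      have hw : wt3 D = 2 := by
        have hset : (Finset.univ.filter fun k => D k ≠ 0) = {i, j} := by
          ext k
          simp only [Finset.mem_filter, Finset.mem_univ, true_and, Finset.mem_insert,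
            Finset.mem_singleton, hDdef]
          rcases eq_or_ne k i with rfl | hki <;> rcases eq_or_ne k j with rfl | hkj <;>
            simp_all
        rw [wt3, hset, Finset.card_insert_of_notMem (by simpa using hij),
          Finset.card_singleton]
      have := hmin _ hD hne
      omega
    obtain ⟨C0, hC0⟩ := hex
    have key : ∀ a b x y : ZMod 3, a ≠ b →
        ∃ α β : ZMod 3, α * 1 + β * a = x ∧ α * 1 + β * b = y := by decide
    have hsurj : Function.Surjective f := by
      rintro ⟨x, y⟩
      obtain ⟨α, β, hx, hy⟩ := key _ _ x y hC0
      refine ⟨α • ⟨fun _ => 1, hones⟩ + β • C0, ?_⟩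
      have hfv : f (α • (⟨fun _ => 1, hones⟩ : G) + β • C0)
          = (α * 1 + β * (C0 : Fin 12 → ZMod 3) i,
             α * 1 + β * (C0 : Fin 12 → ZMod 3) j) := rfl
      rw [hfv, hx, hy]
    have := fiber_card_pred f.toAddMonoidHom hsurj (fun p => p.1 ≠ 0 ∧ p.2 ≠ 0)
    simp only [LinearMap.toAddMonoidHom_coe, hcard] at this
    have h2 : (Finset.univ.filter fun p : ZMod 3 × ZMod 3 => p.1 ≠ 0 ∧ p.2 ≠ 0).card = 4 := by
      decide
    have h3 : Fintype.card (ZMod 3 × ZMod 3) = 9 := by decide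
    rw [h2, h3] at this
    have hf' : ∀ C : G, f C = ((C : Fin 12 → ZMod 3) i, (C : Fin 12 → ZMod 3) j) := fun C => rfl
    simp only [hf'] at this
    omega

  -- pointwise weight facts
  have hwle : ∀ C : G, wt3 (C : Fin 12 → ZMod 3) ≤ 12 := by
    intro C
    have := Finset.card_filter_le (Finset.univ : Finset (Fin 12))
      (fun i => (C : Fin 12 → ZMod 3) i ≠ 0)
    simpa [wt3] using this
  have hwzero : ∀ C : G, wt3 (C : Fin 12 → ZMod 3) = 0 ↔ (C : Fin 12 → ZMod 3) = 0 := by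
    intro C
    rw [wt3, Finset.card_eq_zero, Finset.filter_eq_empty_iff]
    constructor
    · intro h; funext k; simpa using h (Finset.mem_univ k)
    · intro h k _; simp [h]
  have hwdvd : ∀ C : G, 3 ∣ wt3 (C : Fin 12 → ZMod 3) := by
    intro C
    have h1 : ((wt3 (C : Fin 12 → ZMod 3) : ℕ) : ZMod 3)
        = ∑ k, (C : Fin 12 → ZMod 3) k * (C : Fin 12 → ZMod 3) k := by
      rw [wt3, Finset.card_filter, Nat.cast_sum]
      refine Finset.sum_congr rfl fun k _ => ?_
      have hx : ∀ x : ZMod 3, ((if x ≠ 0 then 1 else 0 : ℕ) : ZMod 3) = x * x := by decide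
      exact hx _
    rw [horth _ C.2 _ C.2] at h1
    exact (ZMod.natCast_eq_zero_iff _ _).mp h1
  have hwmem : ∀ C : G, wt3 (C : Fin 12 → ZMod 3) = 0 ∨ wt3 (C : Fin 12 → ZMod 3) = 6
      ∨ wt3 (C : Fin 12 → ZMod 3) = 9 ∨ wt3 (C : Fin 12 → ZMod 3) = 12 := by
    intro C
    have h1 := hwle C
    have h2 := hwdvd C
    rcases eq_or_ne (C : Fin 12 → ZMod 3) 0 with h | h
    · left; rw [hwzero]; exact h
    · have := hmin _ C.2 h; omega
  -- total weight
  have T1 : ∑ C : G, wt3 (C : Fin 12 → ZMod 3) = 5832 := by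
    have h1 : ∀ C : G, wt3 (C : Fin 12 → ZMod 3)
        = ∑ i, if (C : Fin 12 → ZMod 3) i ≠ 0 then 1 else 0 :=
      fun C => Finset.card_filter _ _
    rw [Finset.sum_congr rfl fun C _ => h1 C, Finset.sum_comm]
    have h2 : ∀ i : Fin 12,
        (∑ C : G, if (C : Fin 12 → ZMod 3) i ≠ 0 then 1 else 0) = 486 := by
      intro i
      rw [← S1 i, Finset.card_filter]
    rw [Finset.sum_congr rfl fun i _ => h2 i]
    simp
  -- second moment
  have T2 : ∑ C : G, (wt3 (C : Fin 12 → ZMod 3))^2 = 48600 := by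
    have hpt : ∀ C : G, (wt3 (C : Fin 12 → ZMod 3))^2
        = ∑ i, ∑ j, if ((C : Fin 12 → ZMod 3) i ≠ 0 ∧ (C : Fin 12 → ZMod 3) j ≠ 0)
            then 1 else 0 := by
      intro C
      rw [sq, wt3, Finset.card_filter, Finset.sum_mul_sum]
      refine Finset.sum_congr rfl fun i _ => Finset.sum_congr rfl fun j _ => ?_
      by_cases h1 : (C : Fin 12 → ZMod 3) i ≠ 0 <;>
        by_cases h2 : (C : Fin 12 → ZMod 3) j ≠ 0 <;> simp [h1, h2]
    rw [Finset.sum_congr rfl fun C _ => hpt C, Finset.sum_comm]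
    have hsw : ∀ i : Fin 12,
        (∑ C : G, ∑ j, if ((C : Fin 12 → ZMod 3) i ≠ 0 ∧ (C : Fin 12 → ZMod 3) j ≠ 0)
          then 1 else 0)
        = ∑ j, ∑ C : G, if ((C : Fin 12 → ZMod 3) i ≠ 0 ∧ (C : Fin 12 → ZMod 3) j ≠ 0)
          then 1 else 0 := fun i => Finset.sum_comm
    rw [Finset.sum_congr rfl fun i _ => hsw i]
    have hcount : ∀ i j : Fin 12,
        (∑ C : G, if ((C : Fin 12 → ZMod 3) i ≠ 0 ∧ (C : Fin 12 → ZMod 3) j ≠ 0)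
          then 1 else 0) = if i = j then 486 else 324 := by
      intro i j
      rcases eq_or_ne i j with rfl | hij
      · rw [if_pos rfl, ← S1 i, Finset.card_filter]
        refine Finset.sum_congr rfl fun C _ => ?_
        by_cases h : (C : Fin 12 → ZMod 3) i ≠ 0 <;> simp [h]
      · rw [if_neg hij, ← S2 i j hij, Finset.card_filter]
    rw [Finset.sum_congr rfl fun i _ => Finset.sum_congr rfl fun j _ => hcount i j]
    have hrow : ∀ i : Fin 12, (∑ j : Fin 12, if i = j then 486 else 324) = 4050 := by decide
    rw [Finset.sum_congr rfl fun i _ => hrow i]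
    simp
  -- count of full-weight words
  have ha12 : (Finset.univ.filter fun C : G => wt3 (C : Fin 12 → ZMod 3) = 12).card = 24 := by
    have key : ∀ C : G, ((wt3 (C : Fin 12 → ZMod 3) : ℤ) - 6) * ((wt3 (C : Fin 12 → ZMod 3) : ℤ) - 9)
        = (if (C : Fin 12 → ZMod 3) = 0 then (54 : ℤ) else 0)
          + (if wt3 (C : Fin 12 → ZMod 3) = 12 then (18 : ℤ) else 0) := by
      intro C
      rcases hwmem C with h | h | h | h
      · rw [h, if_pos ((hwzero C).mp h)]
        norm_num
      · have h0 : (C : Fin 12 → ZMod 3) ≠ 0 := by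
          intro hz; rw [← hwzero C] at hz; omega
        rw [h, if_neg h0]; norm_num
      · have h0 : (C : Fin 12 → ZMod 3) ≠ 0 := by
          intro hz; rw [← hwzero C] at hz; omega
        rw [h, if_neg h0]; norm_num
      · have h0 : (C : Fin 12 → ZMod 3) ≠ 0 := by
          intro hz; rw [← hwzero C] at hz; omega
        rw [h, if_neg h0, if_pos rfl]; norm_num
    have hL : ∑ C : G, ((wt3 (C : Fin 12 → ZMod 3) : ℤ) - 6) * ((wt3 (C : Fin 12 → ZMod 3) : ℤ) - 9)
        = 486 := by
      have hexp : ∀ C : G, ((wt3 (C : Fin 12 → ZMod 3) : ℤ) - 6) * ((wt3 (C : Fin 12 → ZMod 3) : ℤ) - 9)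
          = ((wt3 (C : Fin 12 → ZMod 3))^2 : ℕ) - 15 * (wt3 (C : Fin 12 → ZMod 3) : ℤ) + 54 := by
        intro C; push_cast; ring
      rw [Finset.sum_congr rfl fun C _ => hexp C, Finset.sum_add_distrib,
        Finset.sum_sub_distrib, ← Nat.cast_sum, ← Finset.mul_sum, ← Nat.cast_sum, T1, T2]
      simp [hcard]
    have hR : ∑ C : G, ((if (C : Fin 12 → ZMod 3) = 0 then (54 : ℤ) else 0)
          + (if wt3 (C : Fin 12 → ZMod 3) = 12 then (18 : ℤ) else 0))
        = 54 + 18 * (Finset.univ.filter fun C : G => wt3 (C : Fin 12 → ZMod 3) = 12).card := by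
      rw [Finset.sum_add_distrib]
      have hz : (Finset.univ.filter fun C : G => (C : Fin 12 → ZMod 3) = 0) = {0} := by
        ext C
        simp [Finset.mem_filter]
      congr 1
      · rw [← Finset.sum_filter, hz]
        simp
      · rw [← Finset.sum_filter, Finset.sum_const]
        ring
    have hLR : (∑ C : G, ((wt3 (C : Fin 12 → ZMod 3) : ℤ) - 6) * ((wt3 (C : Fin 12 → ZMod 3) : ℤ) - 9))
        = ∑ C : G, ((if (C : Fin 12 → ZMod 3) = 0 then (54 : ℤ) else 0)
          + (if wt3 (C : Fin 12 → ZMod 3) = 12 then (18 : ℤ) else 0)) :=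
      Finset.sum_congr rfl fun C _ => key C
    rw [hL, hR] at hLR
    omega

  -- abbreviations
  set onesV : Fin 12 → ZMod 3 := fun _ => 1 with honesV
  -- full weight words have all entries nonzero
  have hfull : ∀ C : G, wt3 (C : Fin 12 → ZMod 3) = 12 →
      ∀ k, (C : Fin 12 → ZMod 3) k ≠ 0 := by
    intro C hw k
    have huniv : (Finset.univ.filter fun k => (C : Fin 12 → ZMod 3) k ≠ 0) = Finset.univ := by
      apply Finset.eq_univ_of_card
      rw [← wt3, hw]; rfl
    have := Finset.mem_univ k
    rw [← huniv, Finset.mem_filter] at this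
    exact this.2
  -- structure of full weight words
  have hstruct : ∀ C : G, wt3 (C : Fin 12 → ZMod 3) = 12 →
      (Finset.univ.filter fun k => (C : Fin 12 → ZMod 3) k = 1).card
        + (Finset.univ.filter fun k => (C : Fin 12 → ZMod 3) k = -1).card = 12
      ∧ ((Finset.univ.filter fun k => (C : Fin 12 → ZMod 3) k = 1).card = 0
        ∨ (Finset.univ.filter fun k => (C : Fin 12 → ZMod 3) k = 1).card = 6
        ∨ (Finset.univ.filter fun k => (C : Fin 12 → ZMod 3) k = 1).card = 12) := by
    intro C hw
    set a := (Finset.univ.filter fun k => (C : Fin 12 → ZMod 3) k = 1).card with ha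
    set b := (Finset.univ.filter fun k => (C : Fin 12 → ZMod 3) k = -1).card with hb
    have hnot : (Finset.univ.filter fun k => ¬ ((C : Fin 12 → ZMod 3) k = 1))
        = (Finset.univ.filter fun k => (C : Fin 12 → ZMod 3) k = -1) := by
      ext k
      have h0 := hfull C hw k
      have : ∀ x : ZMod 3, x ≠ 0 → (¬ (x = 1) ↔ x = -1) := by decide
      simp only [Finset.mem_filter, Finset.mem_univ, true_and]
      exact this _ h0
    have hab : a + b = 12 := by
      rw [ha, hb, ← hnot, Finset.card_filter_add_card_filter_not]
      rfl
    constructor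
    · exact hab
    -- the sum of entries is zero
    have hsum0 : ∑ k, (C : Fin 12 → ZMod 3) k = 0 := by
      have := horth _ C.2 onesV hones
      simpa [honesV] using this
    have hsplit : ∑ k, (C : Fin 12 → ZMod 3) k = (a : ZMod 3) * 1 + (b : ZMod 3) * (-1) := by
      rw [← Finset.sum_filter_add_sum_filter_not Finset.univ
        (fun k => (C : Fin 12 → ZMod 3) k = 1), hnot]
      congr 1
      · rw [Finset.sum_congr rfl (fun k hk => (Finset.mem_filter.mp hk).2),
          Finset.sum_const, ha]
        simp
      · rw [Finset.sum_congr rfl (fun k hk => (Finset.mem_filter.mp hk).2),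
          Finset.sum_const, hb]
        simp
    have hmod : ((a : ZMod 3)) = (b : ZMod 3) := by
      rw [hsplit] at hsum0
      have : (a : ZMod 3) - b = 0 := by rw [← hsum0]; ring
      linear_combination this
    have hmod' : a % 3 = b % 3 := by
      rwa [ZMod.natCast_eq_natCast_iff] at hmod
    -- exclude a = 3 (via C + 1) and b = 3 (via C - 1)
    have hbw : wt3 ((C : Fin 12 → ZMod 3) - onesV) = b := by
      rw [wt3, hb]
      congr 1
      ext k
      have h0 := hfull C hw k
      have hx : ∀ x : ZMod 3, x ≠ 0 → (x - 1 ≠ 0 ↔ x = -1) := by decide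
      simp only [Finset.mem_filter, Finset.mem_univ, true_and, Pi.sub_apply, honesV]
      exact hx _ h0
    have haw : wt3 ((C : Fin 12 → ZMod 3) + onesV) = a := by
      rw [wt3, ha]
      congr 1
      ext k
      have h0 := hfull C hw k
      have hx : ∀ x : ZMod 3, x ≠ 0 → (x + 1 ≠ 0 ↔ x = 1) := by decide
      simp only [Finset.mem_filter, Finset.mem_univ, true_and, Pi.add_apply, honesV]
      exact hx _ h0
    have hbne3 : b ≠ 3 := by
      intro h3
      have hmem : (C : Fin 12 → ZMod 3) - onesV ∈ G := sub_mem C.2 hones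
      have hne : (C : Fin 12 → ZMod 3) - onesV ≠ 0 := by
        intro h0
        rw [h0] at hbw
        have : wt3 (0 : Fin 12 → ZMod 3) = 0 := by simp [wt3]
        omega
      have := hmin _ hmem hne
      omega
    have hane3 : a ≠ 3 := by
      intro h3
      have hmem : (C : Fin 12 → ZMod 3) + onesV ∈ G := add_mem C.2 hones
      have hne : (C : Fin 12 → ZMod 3) + onesV ≠ 0 := by
        intro h0
        rw [h0] at haw
        have : wt3 (0 : Fin 12 → ZMod 3) = 0 := by simp [wt3]
        omega
      have := hmin _ hmem hne
      omega
    omega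
  -- all-ones codeword
  set oneG : G := (⟨onesV, hones⟩ : G) with honeG
  have honew : wt3 onesV = 12 := by decide
  -- the two halves of the full-weight words
  set A : Finset G := Finset.univ.filter
    (fun C : G => wt3 (C : Fin 12 → ZMod 3) = 12 ∧ (C : Fin 12 → ZMod 3) 0 = 1) with hA
  set A' : Finset G := Finset.univ.filter
    (fun C : G => wt3 (C : Fin 12 → ZMod 3) = 12 ∧ (C : Fin 12 → ZMod 3) 0 = -1) with hA'
  have hwneg : ∀ C : G, wt3 ((-C : G) : Fin 12 → ZMod 3) = wt3 (C : Fin 12 → ZMod 3) := by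
    intro C
    rw [wt3, wt3]
    congr 1
    ext k
    simp
  have hAA' : A.card = A'.card := by
    apply Finset.card_bij (fun C _ => -C)
    · intro C hC
      rw [hA, Finset.mem_filter] at hC
      rw [hA', Finset.mem_filter]
      refine ⟨Finset.mem_univ _, by rw [hwneg]; exact hC.2.1, ?_⟩
      have : ((-C : G) : Fin 12 → ZMod 3) 0 = -((C : Fin 12 → ZMod 3) 0) := rfl
      rw [this, hC.2.2]
    · intro C _ C' _ h
      exact neg_injective h
    · intro C hC
      rw [hA', Finset.mem_filter] at hC
      refine ⟨-C, ?_, by simp⟩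
      rw [hA, Finset.mem_filter]
      refine ⟨Finset.mem_univ _, by rw [hwneg]; exact hC.2.1, ?_⟩
      have : ((-C : G) : Fin 12 → ZMod 3) 0 = -((C : Fin 12 → ZMod 3) 0) := rfl
      rw [this, hC.2.2]
      decide
  have hsplitA : A.card + A'.card = 24 := by
    rw [← ha12]
    have h1 : A = (Finset.univ.filter fun C : G =>
        wt3 (C : Fin 12 → ZMod 3) = 12).filter (fun C : G => (C : Fin 12 → ZMod 3) 0 = 1) := by
      rw [hA, Finset.filter_filter]
    have h2 : A' = (Finset.univ.filter fun C : G =>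
        wt3 (C : Fin 12 → ZMod 3) = 12).filter (fun C : G => ¬ ((C : Fin 12 → ZMod 3) 0 = 1)) := by
      rw [hA', Finset.filter_filter]
      apply Finset.filter_congr
      intro C _
      constructor
      · rintro ⟨hw', hv⟩
        refine ⟨hw', ?_⟩
        have h0 := hfull C hw' 0
        revert hv
        have hx : ∀ x : ZMod 3, x ≠ 0 → (x = -1 → ¬ x = 1) := by decide
        exact hx _ h0
      · rintro ⟨hw', hv⟩
        refine ⟨hw', ?_⟩
        have h0 := hfull C hw' 0
        revert hv
        have hx : ∀ x : ZMod 3, x ≠ 0 → (¬ x = 1 → x = -1) := by decide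
        exact hx _ h0
    rw [h1, h2, Finset.card_filter_add_card_filter_not]
  have hAcard : A.card = 12 := by omega
  have honeA : oneG ∈ A := by
    rw [hA, Finset.mem_filter]
    exact ⟨Finset.mem_univ _, honew, rfl⟩
  -- the target finset
  set s : Finset (Fin 12 → ZMod 3) :=
    Finset.image (fun C : G => (C : Fin 12 → ZMod 3)) (A.erase oneG) with hs
  have hscard : s.card = 11 := by
    rw [hs, Finset.card_image_of_injective _ Subtype.val_injective,
      Finset.card_erase_of_mem honeA, hAcard]
  -- identify the target set with ↑s
  have hset : {C : Fin 12 → ZMod 3 | C ∈ G ∧ C 0 = 1 ∧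
      (Finset.univ.filter fun i => C i = 1).card = 6 ∧
      (Finset.univ.filter fun i => C i = -1).card = 6} = (s : Set (Fin 12 → ZMod 3)) := by
    ext C
    simp only [Set.mem_setOf_eq, Finset.coe_image, Set.mem_image, Finset.mem_coe,
      Finset.mem_erase, hs]
    constructor
    · rintro ⟨hCG, hC0, h1, h2⟩
      -- C has full weight
      have hw : wt3 C = 12 := by
        have hdisj : Disjoint (Finset.univ.filter fun i => C i = 1)
            (Finset.univ.filter fun i => C i = -1) := by
          rw [Finset.disjoint_filter]
          intro i _ hi
          rw [hi]
          decide
        have hsub : (Finset.univ.filter fun i => C i = 1) ∪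
            (Finset.univ.filter fun i => C i = -1) ⊆ Finset.univ.filter fun i => C i ≠ 0 := by
          intro i hi
          rw [Finset.mem_union, Finset.mem_filter, Finset.mem_filter] at hi
          rw [Finset.mem_filter]
          refine ⟨Finset.mem_univ _, ?_⟩
          rcases hi with h | h
          · rw [h.2]; decide
          · rw [h.2]; decide
        have hge : 12 ≤ wt3 C := by
          rw [wt3]
          calc 12 = (Finset.univ.filter fun i => C i = 1).card
              + (Finset.univ.filter fun i => C i = -1).card := by rw [h1, h2]
          _ = ((Finset.univ.filter fun i => C i = 1) ∪
              (Finset.univ.filter fun i => C i = -1)).card := (Finset.card_union_of_disjoint hdisj).symm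
          _ ≤ _ := Finset.card_le_card hsub
        have hle : wt3 C ≤ 12 := by
          have := Finset.card_filter_le (Finset.univ : Finset (Fin 12)) (fun i => C i ≠ 0)
          simpa [wt3] using this
        omega
      refine ⟨⟨C, hCG⟩, ⟨?_, ?_⟩, rfl⟩
      · intro heq
        have : C = onesV := congrArg Subtype.val heq
        rw [this] at h2
        have : (Finset.univ.filter fun i => onesV i = -1).card = 0 := by decide
        omega
      · rw [hA, Finset.mem_filter]
        exact ⟨Finset.mem_univ _, hw, hC0⟩
    · rintro ⟨D, ⟨hDne, hDA⟩, rfl⟩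
      rw [hA, Finset.mem_filter] at hDA
      obtain ⟨-, hw, h0⟩ := hDA
      obtain ⟨hab, habc⟩ := hstruct D hw
      have ha0 : (Finset.univ.filter fun i => (D : Fin 12 → ZMod 3) i = 1).card ≠ 0 := by
        intro h
        rw [Finset.card_eq_zero, Finset.filter_eq_empty_iff] at h
        exact h (Finset.mem_univ 0) h0
      have ha12' : (Finset.univ.filter fun i => (D : Fin 12 → ZMod 3) i = 1).card ≠ 12 := by
        intro h
        apply hDne
        have huniv : (Finset.univ.filter fun i => (D : Fin 12 → ZMod 3) i = 1)
            = Finset.univ := Finset.eq_univ_of_card _ (by rw [h]; rfl)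
        have hDval : (D : Fin 12 → ZMod 3) = onesV := by
          funext k
          have := Finset.mem_univ k
          rw [← huniv, Finset.mem_filter] at this
          exact this.2
        rw [honeG]
        exact Subtype.ext hDval
      refine ⟨D.2, h0, ?_, ?_⟩ <;> omega
  rw [hset, Set.ncard_coe_finset, hscard]
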